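/- Let K be a field, let K[s,t,x,y] be the polynomial ring in four variables, and let Q_n(s,t) ∈ K[s,t] be defined by Q_0 = 1, Q_1 = t, and Q_{n+2} = t·Q_{n+1} − s^2·Q_n for n ≥ 0. Then for all integers m ≥ 1 and n ≥ 1, the colon ideal (x^n, y^n, sx^2+txy+sy^2) : (s^m·x·y^{n−1}) in K[s,t,x,y] equals the ideal (x, y, Q_{n−1}). -/

import Mathlib

open MvPolynomial

/-- The polynomials `Q₀ = 1`, `Q₁ = t`, `Q_{n+2} = t·Q_{n+1} − s²·Q_n`, viewed in the polynomial
ring `K[s,t,x,y]` where `s = X 0`, `t = X 1`, `x = X 2`, `y = X 3`. -/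
noncomputable def Qpoly (K : Type) [Field K] : ℕ → MvPolynomial (Fin 4) K
  | 0 => 1
  | 1 => X 1
  | n + 2 => X 1 * Qpoly K (n + 1) - X 0 ^ 2 * Qpoly K n

/-! ### Auxiliary definitions -/

/-- The same recursion in two variables `s = X 0`, `t = X 1`. -/
noncomputable def qA (K : Type) [Field K] : ℕ → MvPolynomial (Fin 2) K
  | 0 => 1
  | 1 => X 1
  | n + 2 => X 1 * qA K (n + 1) - X 0 ^ 2 * qA K n

/-- Auxiliary cofactor polynomials. -/
noncomputable def Gpoly (K : Type) [Field K] : ℕ → MvPolynomial (Fin 4) K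
  | 0 => X 0
  | N + 1 => -(X 0 * X 2 * Gpoly K N) + X 0 * Qpoly K (N + 1) * X 3 ^ (N + 1)

section Basics

variable {K : Type} [Field K]

lemma mainIdentity (N : ℕ) :
    (X 0 * X 2 ^ 2 + X 1 * X 2 * X 3 + X 0 * X 3 ^ 2 : MvPolynomial (Fin 4) K) * Gpoly K N =
      X 0 * Qpoly K (N + 1) * X 2 * X 3 ^ (N + 1) + X 0 ^ 2 * Qpoly K N * X 3 ^ (N + 2)
        + (-1 : MvPolynomial (Fin 4) K) ^ N * X 0 ^ (N + 2) * X 2 ^ (N + 2) := by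
  induction N with
  | zero => simp only [Gpoly, Qpoly]; ring
  | succ N ih =>
    have hQ : Qpoly K (N + 2) = X 1 * Qpoly K (N + 1) - X 0 ^ 2 * Qpoly K N := rfl
    rw [Gpoly, hQ]
    linear_combination (-(X 0 * X 2) : MvPolynomial (Fin 4) K) * ih

/-! ### The transfer maps between `K[s,t,x,y]` and `(K[s,t])[x,y]` -/

noncomputable def Emap (K : Type) [Field K] :
    MvPolynomial (Fin 4) K →+* MvPolynomial (Fin 2) (MvPolynomial (Fin 2) K) :=
  (aeval ![C (X 0), C (X 1), X 0, X 1] :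
    MvPolynomial (Fin 4) K →ₐ[K] MvPolynomial (Fin 2) (MvPolynomial (Fin 2) K)).toRingHom

noncomputable def E'map (K : Type) [Field K] :
    MvPolynomial (Fin 2) (MvPolynomial (Fin 2) K) →+* MvPolynomial (Fin 4) K :=
  eval₂Hom ((aeval ![X 0, X 1] :
    MvPolynomial (Fin 2) K →ₐ[K] MvPolynomial (Fin 4) K).toRingHom) ![X 2, X 3]

@[simp] lemma Emap_X0 : Emap K (X 0) = C (X 0) := by simp [Emap]
@[simp] lemma Emap_X1 : Emap K (X 1) = C (X 1) := by simp [Emap]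
@[simp] lemma Emap_X2 : Emap K (X 2) = X 0 := by simp [Emap]
@[simp] lemma Emap_X3 : Emap K (X 3) = X 1 := by simp [Emap]

@[simp] lemma E'map_X0 : E'map K (X 0) = X 2 := by simp [E'map]
@[simp] lemma E'map_X1 : E'map K (X 1) = X 3 := by simp [E'map]
@[simp] lemma E'map_C (a : MvPolynomial (Fin 2) K) :
    E'map K (C a) = aeval ![X 0, X 1] a := by simp [E'map]

lemma E'map_Emap (p : MvPolynomial (Fin 4) K) : E'map K (Emap K p) = p := by
  have : (E'map K).comp (Emap K) = RingHom.id _ := by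
    apply MvPolynomial.ringHom_ext
    · intro r
      simp [Emap, E'map, algebraMap_eq]
    · intro i
      fin_cases i <;> simp [Emap, E'map]
  exact congrFun (congrArg (fun f => f.toFun) this) p

lemma Emap_E'map (p : MvPolynomial (Fin 2) (MvPolynomial (Fin 2) K)) :
    Emap K (E'map K p) = p := by
  have : (Emap K).comp (E'map K) = RingHom.id _ := by
    apply MvPolynomial.ringHom_ext
    · intro a
      simp only [RingHom.coe_comp, Function.comp_apply, RingHom.id_apply, E'map_C]
      induction a using MvPolynomial.induction_on with
      | C r => simp [algebraMap_eq, Emap, MvPolynomial.aeval_C]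
      | add p q hp hq => rw [map_add, map_add, hp, hq, map_add]
      | mul_X p i hp =>
        rw [map_mul, map_mul, map_mul]
        rw [hp]
        refine congrArg (HMul.hMul _) ?_
        fin_cases i <;> simp
    · intro i
      fin_cases i <;> simp
  exact congrFun (congrArg (fun f => f.toFun) this) p

lemma E'map_C_qA (k : ℕ) : E'map K (C (qA K k)) = Qpoly K k := by
  rw [E'map_C]
  induction k using Nat.twoStepInduction with
  | zero => simp [qA, Qpoly]
  | one => simp [qA, Qpoly]
  | more k ih1 ih2 =>
    show aeval ![X 0, X 1] (X 1 * qA K (k + 1) - X 0 ^ 2 * qA K k) = Qpoly K (k + 2)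
    rw [map_sub, map_mul, map_mul, map_pow, ih1, ih2]
    show _ = X 1 * Qpoly K (k + 1) - X 0 ^ 2 * Qpoly K k
    simp

/-! ### Coprimality facts about `qA` -/

lemma qA_eval_s0 (k : ℕ) :
    aeval ![0, X 1] (qA K k) = (X 1 : MvPolynomial (Fin 2) K) ^ k := by
  induction k using Nat.twoStepInduction with
  | zero => simp [qA]
  | one => simp [qA]
  | more k ih1 ih2 =>
    show aeval ![0, X 1] (X 1 * qA K (k + 1) - X 0 ^ 2 * qA K k) = _
    rw [map_sub, map_mul, map_mul, map_pow, ih1, ih2]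
    simp [pow_succ]
    ring

lemma X0_not_dvd_qA (k : ℕ) : ¬ (X 0 : MvPolynomial (Fin 2) K) ∣ qA K k := by
  rintro ⟨d, hd⟩
  have := congrArg (aeval ![0, X 1] :
    MvPolynomial (Fin 2) K →ₐ[K] MvPolynomial (Fin 2) K) hd
  rw [qA_eval_s0, map_mul] at this
  simp at this

lemma prime_X0 : Prime (X 0 : MvPolynomial (Fin 2) K) := by
  rw [← MulEquiv.prime_iff (finSuccEquiv K 1).toMulEquiv]
  have : (finSuccEquiv K 1) (X 0) = Polynomial.X := finSuccEquiv_X_zero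
  rw [show ((finSuccEquiv K 1).toMulEquiv (X 0)) = Polynomial.X from this]
  exact Polynomial.prime_X

lemma isRelPrime_qA_X0 (k : ℕ) : IsRelPrime (qA K k) (X 0 : MvPolynomial (Fin 2) K) := by
  intro d hd1 hd2
  obtain ⟨e, he⟩ := hd2
  rcases (prime_X0 (K := K)).irreducible.isUnit_or_isUnit he with h | h
  · exact h
  · exfalso
    apply X0_not_dvd_qA (K := K) k
    obtain ⟨u, rfl⟩ := h
    have hXd : (X 0 : MvPolynomial (Fin 2) K) ∣ d := by
      refine ⟨(↑u⁻¹ : _), ?_⟩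
      rw [he, mul_assoc]
      simp
    exact hXd.trans hd1

lemma isRelPrime_qA_succ (k : ℕ) : IsRelPrime (qA K (k + 1)) (qA K k) := by
  induction k with
  | zero =>
    show IsRelPrime (qA K 1) 1
    exact isRelPrime_one_right
  | succ k ih =>
    intro d hd1 hd2
    have hrec : qA K (k + 2) = X 1 * qA K (k + 1) - X 0 ^ 2 * qA K k := rfl
    have hdvd : d ∣ X 0 ^ 2 * qA K k := by
      have h2 : X 0 ^ 2 * qA K k = X 1 * qA K (k + 1) - qA K (k + 2) := by rw [hrec]; ring
      rw [h2]
      exact dvd_sub (Dvd.dvd.mul_left hd2 _) hd1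
    have h1 : IsRelPrime (qA K (k + 1)) (X 0 ^ 2 * qA K k) :=
      ((isRelPrime_qA_X0 (k + 1)).pow_right).mul_right ih
    exact h1 hd2 hdvd

end Basics

/-! ### Extracting the linear system from a polynomial identity -/

noncomputable def Dd (a b : ℕ) : Fin 2 →₀ ℕ := Finsupp.single 0 a + Finsupp.single 1 b

lemma Dd_apply0 (a b : ℕ) : Dd a b 0 = a := by simp [Dd]
lemma Dd_apply1 (a b : ℕ) : Dd a b 1 = b := by simp [Dd, Finsupp.single_apply]

lemma Dd_le {i j a b : ℕ} : Dd i j ≤ Dd a b ↔ i ≤ a ∧ j ≤ b := by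
  constructor
  · intro h
    exact ⟨by simpa [Dd_apply0] using h 0, by simpa [Dd_apply1] using h 1⟩
  · rintro ⟨h1, h2⟩ s
    fin_cases s <;> simp [Dd_apply0, Dd_apply1, h1, h2]

lemma Dd_sub (a b i j : ℕ) : Dd a b - Dd i j = Dd (a - i) (b - j) := by
  ext s
  fin_cases s <;> simp [Finsupp.tsub_apply, Dd_apply0, Dd_apply1]

lemma Dd_eq {a b a' b' : ℕ} : Dd a b = Dd a' b' ↔ a = a' ∧ b = b' := by
  constructor
  · intro h
    exact ⟨by rw [← Dd_apply0 a b, h, Dd_apply0], by rw [← Dd_apply1 a b, h, Dd_apply1]⟩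
  · rintro ⟨rfl, rfl⟩; rfl

section Coeffs

variable {A : Type*} [CommRing A]

lemma coeff_Dd_monomial_mul (a b i j : ℕ) (r : A) (p : MvPolynomial (Fin 2) A) :
    coeff (Dd a b) (monomial (Dd i j) r * p) =
      if i ≤ a ∧ j ≤ b then r * coeff (Dd (a - i) (b - j)) p else 0 := by
  rw [coeff_monomial_mul', Dd_sub]
  simp [Dd_le]

lemma coeff_Dd_monomial (a b i j : ℕ) (r : A) :
    coeff (Dd a b) (monomial (Dd i j) r) = if i = a ∧ j = b then r else 0 := by
  rw [coeff_monomial]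
  simp [Dd_eq, eq_comm]

lemma mono_form (i j : ℕ) (r : A) :
    (monomial (Dd i j) r : MvPolynomial (Fin 2) A) = C r * X 0 ^ i * X 1 ^ j := by
  rw [C_apply, X_pow_eq_monomial, X_pow_eq_monomial, monomial_mul, monomial_mul]
  simp [Dd]

noncomputable def ww (N : ℕ) (H : MvPolynomial (Fin 2) A) : ℕ → A :=
  fun j => if j ≤ N then coeff (Dd j (N - j)) H else 0

variable (s t c : A) (N M : ℕ) (H U V : MvPolynomial (Fin 2) A)
variable (hEq : C c * (C s ^ (M + 1) * X 0 * X 1 ^ (N + 1)) =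
    H * (C s * X 0 ^ 2 + C t * X 0 * X 1 + C s * X 1 ^ 2) + U * X 0 ^ (N + 2)
      + V * X 1 ^ (N + 2))

include hEq

lemma master_eq :
    (monomial (Dd 1 (N + 1)) (s ^ (M + 1) * c) : MvPolynomial (Fin 2) A) =
      monomial (Dd 2 0) s * H + monomial (Dd 1 1) t * H + monomial (Dd 0 2) s * H
        + monomial (Dd (N + 2) 0) 1 * U + monomial (Dd 0 (N + 2)) 1 * V := by
  simp only [mono_form, map_mul, map_pow, map_one]
  linear_combination hEq

lemma sysE0 : t * ww N H 0 + s * ww N H 1 = s ^ (M + 1) * c := by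
  have h := congrArg (coeff (Dd 1 (N + 1))) (master_eq s t c N M H U V hEq)
  simp only [coeff_add, coeff_Dd_monomial_mul, coeff_Dd_monomial, Nat.add_sub_cancel,
    Nat.sub_zero, Nat.sub_self, Nat.succ_sub_one, eq_self_iff_true, and_self, true_and,
    and_true, if_true, ite_true] at h
  rw [show N + 1 - 2 = N - 1 by omega] at h
  unfold ww
  try simp only [Nat.sub_zero]
  split_ifs at h ⊢ <;> first | omega | linear_combination h | linear_combination -h

lemma sysEmid (j : ℕ) (hj : j + 1 ≤ N) :
    s * ww N H j + t * ww N H (j + 1) + s * ww N H (j + 2) = 0 := by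
  have h := congrArg (coeff (Dd (j + 2) (N - j))) (master_eq s t c N M H U V hEq)
  simp only [coeff_add, coeff_Dd_monomial_mul, coeff_Dd_monomial, Nat.add_sub_cancel,
    Nat.sub_zero, Nat.sub_self, Nat.succ_sub_one, eq_self_iff_true, and_self, true_and,
    and_true, if_true, ite_true] at h
  rw [show N - j - 1 = N - (j + 1) by omega, show N - j - 2 = N - (j + 2) by omega] at h
  unfold ww
  try simp only [Nat.sub_zero]
  split_ifs at h ⊢ <;> first | omega | linear_combination h | linear_combination -h

end Coeffs

/-! ### Solving the tridiagonal system -/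

lemma elimination {A : Type*} [CommRing A] (s t : A) (q w : ℕ → A) (N : ℕ)
    (hq0 : q 0 = 1) (hq1 : q 1 = t)
    (hqrec : ∀ k, q (k + 2) = t * q (k + 1) - s ^ 2 * q k)
    (hw : ∀ j, j + 1 ≤ N → s * w j + t * w (j + 1) + s * w (j + 2) = 0)
    (hwz : ∀ j, N < j → w j = 0) :
    q (N + 1) * w 0 = q N * (t * w 0 + s * w 1) := by
  have claim : ∀ r j, j + r + 1 = N → q (r + 1) * w (j + 1) + s * q r * w j = 0 := by
    intro r
    induction r with
    | zero =>
      intro j hj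
      have h1 := hw j (by omega)
      have h2 := hwz (j + 2) (by omega)
      rw [h2] at h1
      rw [hq1, hq0]
      linear_combination h1
    | succ r ih =>
      intro j hj
      have h1 := hw j (by omega)
      have h2 := ih (j + 1) (by omega)
      rw [hqrec]
      linear_combination q (r + 1) * h1 - s * h2
  cases N with
  | zero =>
    have h1 := hwz 1 (by omega)
    rw [h1, hq0, hq1]
    ring
  | succ N' =>
    have h2 := claim N' 0 (by omega)
    rw [hqrec]
    linear_combination (-s) * h2

/-- A convenient membership lemma. -/
lemma span3_mem {R : Type*} [CommRing R] (a b c p q r : R) :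
    p * a + q * b + r * c ∈ Ideal.span ({a, b, c} : Set R) := by
  have ha : a ∈ Ideal.span ({a, b, c} : Set R) := Ideal.subset_span (by simp)
  have hb : b ∈ Ideal.span ({a, b, c} : Set R) := Ideal.subset_span (by simp)
  have hc : c ∈ Ideal.span ({a, b, c} : Set R) := Ideal.subset_span (by simp)
  exact add_mem (add_mem (Ideal.mul_mem_left _ _ ha) (Ideal.mul_mem_left _ _ hb))
    (Ideal.mul_mem_left _ _ hc)

/-! ### The main theorem -/

set_option maxHeartbeats 2000000 in
/-- In `K[s,t,x,y]` (with `s = X 0`, `t = X 1`, `x = X 2`, `y = X 3`), for `m, n ≥ 1`: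
`(xⁿ, yⁿ, sx² + txy + sy²) : (sᵐ·x·y^{n−1}) = (x, y, Q_{n−1})`. -/
theorem stmt_11 {K : Type} [Field K] (m n : ℕ) (hm : 1 ≤ m) (hn : 1 ≤ n) :
    Submodule.colon
        (Ideal.span {X 2 ^ n, X 3 ^ n,
          X 0 * X 2 ^ 2 + X 1 * X 2 * X 3 + X 0 * X 3 ^ 2} : Ideal (MvPolynomial (Fin 4) K))
        ((Ideal.span {X 0 ^ m * X 2 * X 3 ^ (n - 1)} : Ideal (MvPolynomial (Fin 4) K)) :
          Set (MvPolynomial (Fin 4) K)) =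
      Ideal.span {X 2, X 3, Qpoly K (n - 1)} := by
  obtain ⟨M, rfl⟩ : ∃ M, m = M + 1 := ⟨m - 1, by omega⟩
  match n, hn with
  | 1, _ =>
    -- the case n = 1 : both sides are the unit ideal
    have hQ : Qpoly K (1 - 1) = 1 := rfl
    rw [hQ]
    have hR : Ideal.span ({X 2, X 3, 1} : Set (MvPolynomial (Fin 4) K)) = ⊤ := by
      rw [Ideal.eq_top_iff_one]
      exact Ideal.subset_span (by simp)
    rw [hR, Ideal.eq_top_iff_one, Ideal.mem_colon_span_singleton]
    have h1 : (1 : MvPolynomial (Fin 4) K) * (X 0 ^ (M + 1) * X 2 * X 3 ^ (1 - 1)) =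
        (X 0 ^ (M + 1) * X 3 ^ (1-1)) * X 2 ^ 1 + 0 * X 3 ^ 1 +
          0 * (X 0 * X 2 ^ 2 + X 1 * X 2 * X 3 + X 0 * X 3 ^ 2) := by ring
    rw [h1]
    exact span3_mem _ _ _ _ _ _
  | (N + 2), _ =>
    rw [show N + 2 - 1 = N + 1 from rfl]
    set f : MvPolynomial (Fin 4) K :=
      X 0 * X 2 ^ 2 + X 1 * X 2 * X 3 + X 0 * X 3 ^ 2 with hf
    set T : MvPolynomial (Fin 4) K := X 0 ^ (M + 1) * X 2 * X 3 ^ (N + 1) with hT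
    set I : Ideal (MvPolynomial (Fin 4) K) :=
      Ideal.span {X 2 ^ (N + 2), X 3 ^ (N + 2), f} with hI
    -- membership of the three generators
    have hx : X 2 * T ∈ I := by
      have h1 : X 2 * T = 0 * X 2 ^ (N + 2) +
          (-(X 0 ^ M * (X 1 * X 2 + X 0 * X 3))) * X 3 ^ (N + 2) +
          (X 0 ^ M * X 3 ^ (N + 1)) * f := by
        rw [hf]; ring
      rw [h1]
      exact span3_mem _ _ _ _ _ _
    have hy : X 3 * T ∈ I := by
      have h1 : X 3 * T = 0 * X 2 ^ (N + 2) + (X 0 ^ (M + 1) * X 2) * X 3 ^ (N + 2) +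
          0 * f := by ring
      rw [h1]
      exact span3_mem _ _ _ _ _ _
    have hQmem : Qpoly K (N + 1) * T ∈ I := by
      have h1 : Qpoly K (N + 1) * T =
          (-((-1 : MvPolynomial (Fin 4) K) ^ N * X 0 ^ M * X 0 ^ (N + 2))) * X 2 ^ (N + 2) +
          (-(X 0 ^ M * X 0 ^ 2 * Qpoly K N)) * X 3 ^ (N + 2) +
          (X 0 ^ M * Gpoly K N) * f := by
        rw [hf, hT]
        linear_combination (-(X 0 ^ M) : MvPolynomial (Fin 4) K) * mainIdentity (K := K) N
      rw [h1]
      exact span3_mem _ _ _ _ _ _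
    -- products with elements of (x, y)
    have hxy : ∀ p ∈ Ideal.span ({X 2, X 3} : Set (MvPolynomial (Fin 4) K)), p * T ∈ I := by
      intro p hp
      obtain ⟨a, b, rfl⟩ := Ideal.mem_span_pair.mp hp
      have h1 : (a * X 2 + b * X 3) * T = a * (X 2 * T) + b * (X 3 * T) := by ring
      rw [h1]
      exact add_mem (Ideal.mul_mem_left _ _ hx) (Ideal.mul_mem_left _ _ hy)
    apply le_antisymm
    · -- hard direction
      intro g hg
      have hgT : g * T ∈ I := Ideal.mem_colon_span_singleton.mp hg
      set c : MvPolynomial (Fin 2) K := coeff 0 (Emap K g) with hc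
      set ct : MvPolynomial (Fin 4) K := E'map K (C c) with hct
      -- g - ct ∈ (x, y)
      have hsplitS : Emap K g - C c ∈
          Ideal.span ({X 0, X 1} : Set (MvPolynomial (Fin 2) (MvPolynomial (Fin 2) K))) := by
        have himg : ({X 0, X 1} : Set (MvPolynomial (Fin 2) (MvPolynomial (Fin 2) K))) =
            MvPolynomial.X '' Set.univ := by
          ext p
          simp only [Set.image_univ, Set.mem_range, Set.mem_insert_iff, Set.mem_singleton_iff]
          constructor
          · rintro (rfl | rfl)
            exacts [⟨0, rfl⟩, ⟨1, rfl⟩]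
          · rintro ⟨i, rfl⟩
            fin_cases i
            · left; rfl
            · right; rfl
        rw [himg, mem_ideal_span_X_image]
        intro mm hmm
        rcases eq_or_ne mm 0 with rfl | hne
        · exfalso
          rw [mem_support_iff] at hmm
          apply hmm
          simp [coeff_sub, hc]
        · obtain ⟨i, hi⟩ : ∃ i, mm i ≠ 0 := by
            by_contra hcon
            push_neg at hcon
            exact hne (Finsupp.ext fun i => hcon i)
          exact ⟨i, Set.mem_univ i, hi⟩
      have hsplit : g - ct ∈ Ideal.span ({X 2, X 3} : Set (MvPolynomial (Fin 4) K)) := by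
        obtain ⟨a, b, hab⟩ := Ideal.mem_span_pair.mp hsplitS
        refine Ideal.mem_span_pair.mpr ⟨E'map K a, E'map K b, ?_⟩
        have := congrArg (E'map K) hab
        rw [map_add, map_mul, map_mul, E'map_X0, E'map_X1, map_sub, E'map_Emap] at this
        rw [this, hct]
      have hctT : ct * T ∈ I := by
        have h1 : ct * T = g * T - (g - ct) * T := by ring
        rw [h1]
        exact sub_mem hgT (hxy _ hsplit)
      -- extract a representation
      rw [hI] at hctT
      rw [show ({X 2 ^ (N + 2), X 3 ^ (N + 2), f} : Set (MvPolynomial (Fin 4) K)) =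
        insert (X 2 ^ (N + 2)) {X 3 ^ (N + 2), f} from rfl] at hctT
      obtain ⟨u, z, hz, huz⟩ := Ideal.mem_span_insert.mp hctT
      obtain ⟨v, z', hz', hvz⟩ := Ideal.mem_span_insert.mp hz
      obtain ⟨h, hh⟩ := Ideal.mem_span_singleton'.mp hz'
      have hrep : ct * T = u * X 2 ^ (N + 2) + v * X 3 ^ (N + 2) + h * f := by
        rw [huz, hvz, ← hh]; ring
      -- move to (K[s,t])[x,y]
      have hEqS : C c * (C (X 0) ^ (M + 1) * X 0 * X 1 ^ (N + 1)) =
          (Emap K h) * (C (X 0) * X 0 ^ 2 + C (X 1) * X 0 * X 1 + C (X 0) * X 1 ^ 2)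
            + (Emap K u) * X 0 ^ (N + 2) + (Emap K v) * X 1 ^ (N + 2) := by
        have e1 := congrArg (Emap K) hrep
        rw [hct, hT, hf] at e1
        simp only [map_add, map_mul, map_pow, Emap_X0, Emap_X1, Emap_X2, Emap_X3,
          Emap_E'map] at e1
        linear_combination e1
      -- the linear system and elimination
      set w : ℕ → MvPolynomial (Fin 2) K := ww N (Emap K h) with hw
      have hE0 : X 1 * w 0 + X 0 * w 1 = X 0 ^ (M + 1) * c :=
        sysE0 (X 0) (X 1) c N M (Emap K h) (Emap K u) (Emap K v) hEqS
      have hEm : ∀ j, j + 1 ≤ N → X 0 * w j + X 1 * w (j + 1) + X 0 * w (j + 2) = 0 :=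
        fun j hj => sysEmid (X 0) (X 1) c N M (Emap K h) (Emap K u) (Emap K v) hEqS j hj
      have hwz : ∀ j, N < j → w j = 0 := by
        intro j hj
        rw [hw]
        unfold ww
        rw [if_neg (by omega)]
      have helim := elimination (X 0) (X 1) (qA K) w N rfl rfl (fun k => rfl) hEm hwz
      rw [hE0] at helim
      -- divisibility
      have hdvd : qA K (N + 1) ∣ (qA K N * X 0 ^ (M + 1)) * c := by
        refine Dvd.intro (w 0) ?_
        linear_combination helim
      have hrel : IsRelPrime (qA K (N + 1)) (qA K N * X 0 ^ (M + 1)) :=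
        (isRelPrime_qA_succ N).mul_right ((isRelPrime_qA_X0 (N + 1)).pow_right)
      have hdc : qA K (N + 1) ∣ c := hrel.dvd_of_dvd_mul_left hdvd
      obtain ⟨d, hd⟩ := hdc
      -- conclude
      have hctQ : ct = Qpoly K (N + 1) * E'map K (C d) := by
        rw [hct, hd, map_mul, map_mul, E'map_C_qA]
      have hg2 : g = (g - ct) + ct := by ring
      rw [hg2]
      refine add_mem ?_ ?_
      · refine Ideal.span_mono ?_ hsplit
        intro p hp
        simp only [Set.mem_insert_iff, Set.mem_singleton_iff] at hp ⊢
        tauto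
      · rw [hctQ]
        exact Ideal.mul_mem_right _ _ (Ideal.subset_span (by simp))
    · -- easy direction
      rw [Ideal.span_le]
      rintro p hp
      simp only [Set.mem_insert_iff, Set.mem_singleton_iff] at hp
      rcases hp with rfl | rfl | rfl
      · exact Ideal.mem_colon_span_singleton.mpr hx
      · exact Ideal.mem_colon_span_singleton.mpr hy
      · exact Ideal.mem_colon_span_singleton.mpr hQmem
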